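/- For every real k×n matrix W of full rank k, the potential V(W) = tr[−(WWᵀ)^{−1/2} W A Wᵀ + (1/2)WWᵀ] satisfies V(W) ≥ −(k/2)·σ_max(A)², where σ_max(A) denotes the largest eigenvalue of A and (WWᵀ)^{1/2} is the unique symmetric positive definite square root of WWᵀ. -/

import Mathlib

open Matrix
open scoped Matrix Classical

/-- The unique symmetric positive semidefinite square root of a positive semidefinite real
matrix (junk value `0` on matrices that are not positive semidefinite). -/
noncomputable def msqrt {k : ℕ} (S : Matrix (Fin k) (Fin k) ℝ) : Matrix (Fin k) (Fin k) ℝ :=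
  if h : S.PosSemidef then
    h.1.eigenvectorUnitary.1 * diagonal ((↑) ∘ (√·) ∘ h.1.eigenvalues) *
      (star h.1.eigenvectorUnitary : Matrix (Fin k) (Fin k) ℝ)
  else 0

lemma trace_nonneg_of_posSemidef {m : Type*} [Fintype m] [DecidableEq m]
    {M : Matrix m m ℝ} (h : M.PosSemidef) : 0 ≤ M.trace := by
  exact h.trace_nonneg

lemma trace_mul_nonneg_of_posSemidef {m : Type*} [Fintype m] [DecidableEq m]
    {P Q : Matrix m m ℝ} (hP : P.PosSemidef) (hQ : Q.PosSemidef) :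
    0 ≤ (P * Q).trace := by
  obtain ⟨C, hC⟩ : ∃ C : Matrix m m ℝ, Q = Cᴴ * C := by
    open scoped MatrixOrder in exact CStarAlgebra.nonneg_iff_eq_star_mul_self.mp hQ.nonneg
  rw [hC, ← mul_assoc, Matrix.trace_mul_cycle]
  exact trace_nonneg_of_posSemidef (hP.mul_mul_conjTranspose_same C)

/-- The potential `V(W) = tr[−(WWᵀ)^{−1/2}·WAWᵀ + (1/2)·WWᵀ]` is bounded below by
`−(k/2)·σ_max(A)²`, where `σ_max(A)` is the largest eigenvalue of `A`. -/
theorem potential_bounded_below {k n : ℕ} (hk : 0 < k) (hkn : k < n)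
    (A : Matrix (Fin n) (Fin n) ℝ) (hA : A.PosDef)
    (W : Matrix (Fin k) (Fin n) ℝ) (hW : W.rank = k) :
    Matrix.trace (-((msqrt (W * Wᵀ))⁻¹ * (W * A * Wᵀ)) + (2⁻¹ : ℝ) • (W * Wᵀ)) ≥
      -(k / 2 : ℝ) * (⨆ i : Fin n, hA.isHermitian.eigenvalues i) ^ 2 := by
  haveI : Nonempty (Fin n) := ⟨⟨0, lt_trans hk hkn⟩⟩
  set σ : ℝ := ⨆ i : Fin n, hA.isHermitian.eigenvalues i with hσdef
  set S : Matrix (Fin k) (Fin k) ℝ := W * Wᵀ with hSdef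
  have hWt : Wᴴ = Wᵀ := Matrix.conjTranspose_eq_transpose_of_trivial W
  have hS_psd : S.PosSemidef := by
    have := Matrix.posSemidef_self_mul_conjTranspose W
    rwa [hWt] at this
  have hWinj : Function.Injective (Wᵀ).mulVec := by
    rw [Matrix.mulVec_injective_iff]
    refine linearIndependent_iff_card_eq_finrank_span.mpr ?_
    have h := W.rank_eq_finrank_span_row
    rw [hW] at h
    rw [Matrix.col, Matrix.transpose_transpose]
    rw [Set.finrank]
    rw [Fintype.card_fin]
    exact h
  have hS : S.PosDef := by
    refine Matrix.posDef_iff_dotProduct_mulVec.mpr ⟨hS_psd.isHermitian, fun x hx => ?_⟩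
    have hx' : Wᵀ *ᵥ x ≠ 0 := fun h => hx (by simpa using hWinj (h.trans (Matrix.mulVec_zero Wᵀ).symm))
    have hmv : S *ᵥ x = W *ᵥ (Wᵀ *ᵥ x) := by rw [hSdef, ← Matrix.mulVec_mulVec]
    have hstar : star x = x := by simp
    rw [hmv, hstar, Matrix.dotProduct_mulVec, Matrix.mulVec_transpose]
    have := Matrix.dotProduct_star_self_pos_iff (v := Wᵀ *ᵥ x) |>.mpr hx'
    simpa [Matrix.mulVec_transpose] using this
  set B : Matrix (Fin k) (Fin k) ℝ := hS_psd.1.eigenvectorUnitary.1 *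
    diagonal ((↑) ∘ (√·) ∘ hS_psd.1.eigenvalues) *
      (star hS_psd.1.eigenvectorUnitary : Matrix (Fin k) (Fin k) ℝ) with hBdef
  have hmsqrt : msqrt (W * Wᵀ) = B := by rw [msqrt, dif_pos hS_psd]
  have hB_psd : B.PosSemidef := by
    have hd : (diagonal ((↑) ∘ (√·) ∘ hS_psd.1.eigenvalues) :
        Matrix (Fin k) (Fin k) ℝ).PosSemidef :=
      Matrix.PosSemidef.diagonal (fun i => Real.sqrt_nonneg _)
    have := hd.mul_mul_conjTranspose_same (hS_psd.1.eigenvectorUnitary : Matrix (Fin k) (Fin k) ℝ)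
    rw [hBdef, Matrix.star_eq_conjTranspose]
    exact this
  have hBB : B * B = S := by
    have hspec := hS_psd.1.spectral_theorem
    rw [Unitary.conjStarAlgAut_apply] at hspec
    have hDD : (diagonal ((↑) ∘ (√·) ∘ hS_psd.1.eigenvalues) : Matrix (Fin k) (Fin k) ℝ) *
        diagonal ((↑) ∘ (√·) ∘ hS_psd.1.eigenvalues) =
        diagonal (RCLike.ofReal ∘ hS_psd.1.eigenvalues) := by
      rw [Matrix.diagonal_mul_diagonal]
      congr 1
      funext i
      simp [Real.mul_self_sqrt (hS_psd.eigenvalues_nonneg i)]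
    conv_rhs => rw [hspec]
    rw [hBdef]
    simp only [← mul_assoc]
    rw [mul_assoc _ (star _ : Matrix (Fin k) (Fin k) ℝ) _, Unitary.star_mul_self_of_mem hS_psd.1.eigenvectorUnitary.2, mul_one,
      mul_assoc _ (diagonal _) (diagonal _), hDD]
  have hBdet : IsUnit B.det := by
    have hdS : 0 < S.det := hS.det_pos
    rw [← hBB, Matrix.det_mul] at hdS
    exact isUnit_iff_ne_zero.mpr (fun h => by rw [h] at hdS; simp at hdS)
  have hBinvS : B⁻¹ * S = B := by
    rw [← hBB, ← mul_assoc, Matrix.nonsing_inv_mul B hBdet, one_mul]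
  have hBinv_psd : (B⁻¹).PosSemidef := hB_psd.inv
  have hσ_ub : ∀ i, hA.isHermitian.eigenvalues i ≤ σ := fun i =>
    le_ciSup (Set.Finite.bddAbove (Set.finite_range _)) i
  -- σ • 1 - A is positive semidefinite
  have hA_le : (σ • (1 : Matrix (Fin n) (Fin n) ℝ) - A).PosSemidef := by
    set U : Matrix (Fin n) (Fin n) ℝ :=
      (hA.isHermitian.eigenvectorUnitary : Matrix (Fin n) (Fin n) ℝ) with hUdef
    have hU : U * star U = 1 :=
      (Matrix.mem_unitaryGroup_iff).mp hA.isHermitian.eigenvectorUnitary.2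
    have key : σ • (1 : Matrix (Fin n) (Fin n) ℝ) - A
        = U * Matrix.diagonal (fun i => σ - hA.isHermitian.eigenvalues i) * star U := by
      conv_lhs => rw [hA.isHermitian.spectral_theorem, Unitary.conjStarAlgAut_apply]
      have hdiag : (Matrix.diagonal (RCLike.ofReal ∘ hA.isHermitian.eigenvalues) :
          Matrix (Fin n) (Fin n) ℝ) = Matrix.diagonal hA.isHermitian.eigenvalues := by
        congr 1
      rw [hdiag]
      have h2 : Matrix.diagonal (fun i => σ - hA.isHermitian.eigenvalues i)
          = σ • (1 : Matrix (Fin n) (Fin n) ℝ) - Matrix.diagonal hA.isHermitian.eigenvalues := by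
        rw [Matrix.smul_one_eq_diagonal, ← Matrix.diagonal_sub]
      rw [h2, Matrix.mul_sub, Matrix.sub_mul]
      congr 1
      rw [Matrix.mul_smul, Matrix.mul_one, Matrix.smul_mul, hU]
    have hd : (Matrix.diagonal (fun i => σ - hA.isHermitian.eigenvalues i)).PosSemidef :=
      Matrix.PosSemidef.diagonal (fun i => sub_nonneg.mpr (hσ_ub i))
    have hds := hd.mul_mul_conjTranspose_same U
    rw [← Matrix.star_eq_conjTranspose] at hds
    rwa [key]
  have hWAW : (σ • S - W * A * Wᵀ).PosSemidef := by
    have h := hA_le.mul_mul_conjTranspose_same W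
    rw [hWt] at h
    have hexp : W * (σ • (1 : Matrix (Fin n) (Fin n) ℝ) - A) * Wᵀ = σ • S - W * A * Wᵀ := by
      rw [Matrix.mul_sub, Matrix.sub_mul, Matrix.mul_smul, Matrix.mul_one, Matrix.smul_mul,
        hSdef]
    rwa [hexp] at h
  have h1 : 0 ≤ (B⁻¹ * (σ • S - W * A * Wᵀ)).trace :=
    trace_mul_nonneg_of_posSemidef hBinv_psd hWAW
  have h1' : (B⁻¹ * (W * A * Wᵀ)).trace ≤ σ * B.trace := by
    have heq : B⁻¹ * (σ • S - W * A * Wᵀ) = σ • (B⁻¹ * S) - B⁻¹ * (W * A * Wᵀ) := by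
      rw [Matrix.mul_sub, Matrix.mul_smul]
    rw [heq, hBinvS, Matrix.trace_sub, Matrix.trace_smul, smul_eq_mul] at h1
    linarith
  -- second inequality : tr((B - σ•1)²) ≥ 0
  have hsym : (B - σ • (1 : Matrix (Fin k) (Fin k) ℝ))ᴴ = B - σ • 1 := by
    rw [Matrix.conjTranspose_sub, hB_psd.isHermitian]
    congr 1
    simp
  have h2 : 0 ≤ ((B - σ • (1 : Matrix (Fin k) (Fin k) ℝ)) * (B - σ • 1)).trace := by
    have := trace_nonneg_of_posSemidef (Matrix.posSemidef_conjTranspose_mul_self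
      (B - σ • (1 : Matrix (Fin k) (Fin k) ℝ)))
    rwa [hsym] at this
  have htr : ((B - σ • (1 : Matrix (Fin k) (Fin k) ℝ)) * (B - σ • 1)).trace
      = S.trace - 2 * σ * B.trace + σ ^ 2 * k := by
    simp only [Matrix.sub_mul, Matrix.mul_sub, Matrix.smul_mul, Matrix.mul_smul,
      Matrix.one_mul, Matrix.mul_one, Matrix.trace_sub, Matrix.trace_smul, smul_smul,
      Matrix.trace_one, smul_eq_mul, hBB, Fintype.card_fin]
    ring
  rw [htr] at h2
  -- conclude
  rw [hmsqrt, Matrix.trace_add, Matrix.trace_neg, Matrix.trace_smul, smul_eq_mul]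
  have hkR : (0:ℝ) ≤ (k:ℝ) := Nat.cast_nonneg k
  nlinarith [h1', h2]
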